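/- Let C be the category whose objects are the natural numbers and whose morphisms m ⟶ n are all functions Fin(m+1) → Fin(n+1), let D be the wide subcategory of C with only the injective functions, ι : D ⥤ C the inclusion, and H the left Kan extension functor (Dᵒᵖ ⥤ Type) ⥤ (Cᵒᵖ ⥤ Type) along ιᵒᵖ. Then for every presheaf S : Dᵒᵖ ⥤ Type and every n ∈ ℕ, there is a bijection between H(S)(n) and the quotient of the set of triples (p, f, γ) — with p ∈ ℕ, f : Fin(n+1) → Fin(p+1) a surjective function, and γ ∈ S(p) — by the equivalence relation identifying (p, f, γ) with (p, f', γ') whenever there is a bijection φ : Fin(p+1) → Fin(p+1) (a morphism of D) with f' = φ ∘ f and γ = S(φ)(γ'). -/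

import Mathlib

open CategoryTheory Opposite

/-- The category whose objects are the natural numbers and whose morphisms
`m ⟶ n` are all functions `Fin (m+1) → Fin (n+1)`. -/
structure UCat where
  len : ℕ

instance : Category UCat where
  Hom a b := Fin (a.len + 1) → Fin (b.len + 1)
  id _ := id
  comp f g := g ∘ f

/-- The wide subcategory of `UCat` with only the injective functions. -/
structure UDCat where
  len : ℕ

instance : Category UDCat where
  Hom a b := {f : Fin (a.len + 1) → Fin (b.len + 1) // Function.Injective f}
  id _ := ⟨id, Function.injective_id⟩
  comp f g := ⟨g.1 ∘ f.1, g.2.comp f.2⟩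

/-- The inclusion functor. -/
def inclUDC : UDCat ⥤ UCat where
  obj a := ⟨a.len⟩
  map f := f.1

/-- The type of triples `(p, f, γ)` with `p ∈ ℕ`, `f : Fin (n+1) → Fin (p+1)`
surjective, and `γ ∈ S(p)`. -/
def Triple (S : UDCatᵒᵖ ⥤ Type) (n : ℕ) : Type :=
  {t : Σ p : ℕ, (Fin (n + 1) → Fin (p + 1)) × S.obj (op (UDCat.mk p)) //
    Function.Surjective t.2.1}

/-- The relation identifying `(p, f, γ)` with `(p', f', γ')` whenever there is a
bijection `φ : Fin (p+1) → Fin (p'+1)` (a morphism of the injective category) with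
`f' = φ ∘ f` and `γ = S(φ)(γ')`. (A bijection between `Fin (p+1)` and `Fin (p'+1)`
forces `p = p'`.) -/
def TripleRel (S : UDCatᵒᵖ ⥤ Type) (n : ℕ) (t t' : Triple S n) : Prop :=
  ∃ (φ : Fin (t.1.1 + 1) → Fin (t'.1.1 + 1)) (hφ : Function.Bijective φ),
    t'.1.2.1 = φ ∘ t.1.2.1 ∧
    t.1.2.2 = S.map (Quiver.Hom.op
      (⟨φ, hφ.injective⟩ : UDCat.mk t.1.1 ⟶ UDCat.mk t'.1.1)) t'.1.2.2

namespace Stmt15Aux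
open Function

def rng {m p : ℕ} (f : Fin (m+1) → Fin (p+1)) : Finset (Fin (p+1)) := Finset.image f Finset.univ

lemma rng_card_pos {m p : ℕ} (f : Fin (m+1) → Fin (p+1)) : 0 < (rng f).card :=
  Finset.card_pos.2 ⟨f 0, Finset.mem_image_of_mem f (Finset.mem_univ 0)⟩

def fq {m p : ℕ} (f : Fin (m+1) → Fin (p+1)) : ℕ := (rng f).card - 1

lemma fq_succ {m p : ℕ} (f : Fin (m+1) → Fin (p+1)) : (rng f).card = fq f + 1 :=
  (Nat.succ_pred_eq_of_pos (rng_card_pos f)).symm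

noncomputable def fe {m p : ℕ} (f : Fin (m+1) → Fin (p+1)) :
    Fin (fq f + 1) ≃o {x // x ∈ rng f} :=
  (rng f).orderIsoOfFin (fq_succ f)

lemma mem_rng {m p : ℕ} (f : Fin (m+1) → Fin (p+1)) (i : Fin (m+1)) : f i ∈ rng f :=
  Finset.mem_image_of_mem f (Finset.mem_univ i)

noncomputable def fσ {m p : ℕ} (f : Fin (m+1) → Fin (p+1)) : Fin (m+1) → Fin (fq f + 1) :=
  fun i => (fe f).symm ⟨f i, mem_rng f i⟩

noncomputable def fι {m p : ℕ} (f : Fin (m+1) → Fin (p+1)) : Fin (fq f + 1) → Fin (p+1) :=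
  fun j => ((fe f) j : Fin (p+1))

lemma fι_fσ {m p : ℕ} (f : Fin (m+1) → Fin (p+1)) : fι f ∘ fσ f = f := by
  funext i; simp [fι, fσ]

lemma fι_inj {m p : ℕ} (f : Fin (m+1) → Fin (p+1)) : Function.Injective (fι f) := by
  intro a b h
  exact (fe f).injective (Subtype.ext h)

lemma fσ_surj {m p : ℕ} (f : Fin (m+1) → Fin (p+1)) : Function.Surjective (fσ f) := by
  intro j
  obtain ⟨i, -, hi⟩ := Finset.mem_image.1 ((fe f j).2)
  refine ⟨i, ?_⟩
  simp only [fσ]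
  have h2 : (⟨f i, mem_rng f i⟩ : {x // x ∈ rng f}) = (fe f) j := Subtype.ext hi
  rw [h2]; simp

lemma uniqueFactor {α β γ γ' : Type} {s : α → γ} {i : γ → β} {s' : α → γ'} {i' : γ' → β}
    (h : i ∘ s = i' ∘ s') (hi : Injective i) (hi' : Injective i')
    (hs : Surjective s) (hs' : Surjective s') :
    ∃ ψ : γ → γ', Bijective ψ ∧ s' = ψ ∘ s ∧ i = i' ∘ ψ := by
  choose sec hsec using hs
  have key := congrFun h
  refine ⟨s' ∘ sec, ⟨?_, ?_⟩, ?_, ?_⟩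
  · intro a b hab
    apply hi
    calc i a = i (s (sec a)) := by rw [hsec]
      _ = i' (s' (sec a)) := key _
      _ = i' (s' (sec b)) := congrArg i' hab
      _ = i (s (sec b)) := (key _).symm
      _ = i b := by rw [hsec]
  · intro k
    obtain ⟨x, hx⟩ := hs' k
    refine ⟨s x, hi' ?_⟩
    calc i' (s' (sec (s x))) = i (s (sec (s x))) := (key _).symm
      _ = i (s x) := by rw [hsec]
      _ = i' (s' x) := key _
      _ = i' k := by rw [hx]
  · funext x
    apply hi'
    calc i' (s' x) = i (s x) := (key x).symm
      _ = i (s (sec (s x))) := by rw [hsec]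
      _ = i' (s' (sec (s x))) := key _
  · funext j
    have := key (sec j)
    rw [comp_apply, comp_apply, hsec] at this
    exact this

-- UCat / UDCat hom helpers
def homC {a b : ℕ} (f : Fin (a+1) → Fin (b+1)) : UCat.mk a ⟶ UCat.mk b := f
def homD {a b : ℕ} (f : Fin (a+1) → Fin (b+1)) (hf : Function.Injective f) : UDCat.mk a ⟶ UDCat.mk b :=
  ⟨f, hf⟩

lemma homD_comp {a b c : ℕ} (f : Fin (a+1) → Fin (b+1)) (hf : Function.Injective f)
    (g : Fin (b+1) → Fin (c+1)) (hg : Function.Injective g) :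
    homD f hf ≫ homD g hg = homD (g ∘ f) (hg.comp hf) := rfl

variable (S : UDCatᵒᵖ ⥤ Type)

lemma S_map_comp {a b c : UDCat} (u : a ⟶ b) (v : b ⟶ c) (x : S.obj (op c)) :
    S.map (u ≫ v).op x = S.map u.op (S.map v.op x) := by
  rw [op_comp, FunctorToTypes.map_comp_apply]

noncomputable def factTriple {n m : ℕ} (g : Fin (m+1) → Fin (n+1)) (t : Triple S n) :
    Triple S m :=
  ⟨⟨fq (t.1.2.1 ∘ g), fσ (t.1.2.1 ∘ g),
    S.map (homD (fι (t.1.2.1 ∘ g)) (fι_inj _)).op t.1.2.2⟩, fσ_surj _⟩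

lemma factTriple_rel {n m : ℕ} (g : Fin (m+1) → Fin (n+1)) {t t' : Triple S n}
    (h : TripleRel S n t t') : TripleRel S m (factTriple S g t) (factTriple S g t') := by
  obtain ⟨φ, hφ, h1, h2⟩ := h
  have hcomm : (φ ∘ fι (t.1.2.1 ∘ g)) ∘ fσ (t.1.2.1 ∘ g)
      = fι (t'.1.2.1 ∘ g) ∘ fσ (t'.1.2.1 ∘ g) := by
    rw [Function.comp_assoc, fι_fσ, fι_fσ, h1]
    rfl
  obtain ⟨ψ, hψ, hs, hi⟩ := uniqueFactor hcomm (hφ.injective.comp (fι_inj _)) (fι_inj _)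
    (fσ_surj _) (fσ_surj _)
  refine ⟨ψ, hψ, hs, ?_⟩
  show S.map (homD (fι (t.1.2.1 ∘ g)) (fι_inj _)).op t.1.2.2
    = S.map (homD ψ hψ.injective).op (S.map (homD (fι (t'.1.2.1 ∘ g)) (fι_inj _)).op t'.1.2.2)
  rw [h2, ← S_map_comp, ← S_map_comp]
  have he : homD (fι (t.1.2.1 ∘ g)) (fι_inj _) ≫
      (⟨φ, hφ.injective⟩ : UDCat.mk t.1.1 ⟶ UDCat.mk t'.1.1)
      = homD ψ hψ.injective ≫ homD (fι (t'.1.2.1 ∘ g)) (fι_inj _) := Subtype.ext hi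
  rw [he]

lemma factTriple_rel_self {n m : ℕ} (g : Fin (m+1) → Fin (n+1)) (t : Triple S n)
    (hs : Surjective (t.1.2.1 ∘ g)) :
    TripleRel S m (factTriple S g t) ⟨⟨t.1.1, t.1.2.1 ∘ g, t.1.2.2⟩, hs⟩ := by
  have hcomm : fι (t.1.2.1 ∘ g) ∘ fσ (t.1.2.1 ∘ g) = id ∘ (t.1.2.1 ∘ g) := by
    rw [fι_fσ]; rfl
  obtain ⟨ψ, hψ, hs', hi⟩ := uniqueFactor hcomm (fι_inj _) injective_id (fσ_surj _) hs
  refine ⟨ψ, hψ, hs', ?_⟩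
  show S.map (homD (fι (t.1.2.1 ∘ g)) (fι_inj _)).op t.1.2.2
    = S.map (homD ψ hψ.injective).op t.1.2.2
  have he : homD (fι (t.1.2.1 ∘ g)) (fι_inj _) = homD ψ hψ.injective :=
    Subtype.ext (by simpa [homD] using hi)
  rw [he]

lemma factTriple_comp {n m l : ℕ} (g : Fin (m+1) → Fin (n+1)) (g' : Fin (l+1) → Fin (m+1))
    (t : Triple S n) :
    TripleRel S l (factTriple S g' (factTriple S g t)) (factTriple S (g ∘ g') t) := by
  set h₁ := t.1.2.1 ∘ g with hh₁
  set h₂ := fσ h₁ ∘ g' with hh₂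
  set h₃ := t.1.2.1 ∘ (g ∘ g') with hh₃
  have hcomm : (fι h₁ ∘ fι h₂) ∘ fσ h₂ = fι h₃ ∘ fσ h₃ := by
    rw [Function.comp_assoc, fι_fσ, fι_fσ, hh₂, ← Function.comp_assoc, fι_fσ, hh₁, hh₃]
    rfl
  obtain ⟨ψ, hψ, hs, hi⟩ := uniqueFactor hcomm ((fι_inj h₁).comp (fι_inj h₂)) (fι_inj _)
    (fσ_surj _) (fσ_surj _)
  refine ⟨ψ, hψ, hs, ?_⟩
  show S.map (homD (fι h₂) (fι_inj _)).op (S.map (homD (fι h₁) (fι_inj _)).op t.1.2.2)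
    = S.map (homD ψ hψ.injective).op (S.map (homD (fι h₃) (fι_inj _)).op t.1.2.2)
  rw [← S_map_comp, ← S_map_comp]
  have he : homD (fι h₂) (fι_inj _) ≫ homD (fι h₁) (fι_inj _)
      = homD ψ hψ.injective ≫ homD (fι h₃) (fι_inj _) := Subtype.ext hi
  rw [he]


noncomputable def H0obj : UCatᵒᵖ ⥤ Type where
  obj X := Quot (TripleRel S X.unop.len)
  map {X Y} g := TypeCat.ofHom (Quot.map (factTriple S g.unop) (fun _ _ h => factTriple_rel S g.unop h))
  map_id X := by
    ext x
    induction x using Quot.ind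
    rename_i t
    show Quot.mk _ (factTriple S id t) = Quot.mk _ t
    exact Quot.sound (factTriple_rel_self S id t t.2)
  map_comp {X Y Z} g g' := by
    ext x
    induction x using Quot.ind
    rename_i t
    show Quot.mk _ (factTriple S (g.unop ∘ g'.unop) t)
      = Quot.mk _ (factTriple S g'.unop (factTriple S g.unop t))
    exact (Quot.sound (factTriple_comp S g.unop g'.unop t)).symm

noncomputable def H0 : (UDCatᵒᵖ ⥤ Type) ⥤ (UCatᵒᵖ ⥤ Type) where
  obj S := H0obj S
  map {S S'} u :=
    { app := fun X => TypeCat.ofHom (Quot.map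
        (fun t => ⟨⟨t.1.1, t.1.2.1, u.app (op (UDCat.mk t.1.1)) t.1.2.2⟩, t.2⟩)
        (fun t t' h => by
          obtain ⟨φ, hφ, h1, h2⟩ := h
          refine ⟨φ, hφ, h1, ?_⟩
          show u.app (op (UDCat.mk t.1.1)) t.1.2.2
            = S'.map (Quiver.Hom.op (⟨φ, hφ.injective⟩ : UDCat.mk t.1.1 ⟶ UDCat.mk t'.1.1))
              (u.app (op (UDCat.mk t'.1.1)) t'.1.2.2)
          rw [h2]
          exact FunctorToTypes.naturality u _ _))
      naturality := fun X Y g => by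
        ext x
        induction x using Quot.ind
        rename_i t
        show Quot.mk _ (⟨⟨_, fσ (t.1.2.1 ∘ g.unop),
            u.app _ (S.map (homD (fι (t.1.2.1 ∘ g.unop)) (fι_inj _)).op t.1.2.2)⟩, fσ_surj _⟩
              : Triple S' Y.unop.len)
          = Quot.mk _ (factTriple S' g.unop ⟨⟨t.1.1, t.1.2.1, u.app _ t.1.2.2⟩, t.2⟩)
        have hn : u.app _ (S.map (homD (fι (t.1.2.1 ∘ g.unop)) (fι_inj _)).op t.1.2.2)
            = S'.map (homD (fι (t.1.2.1 ∘ g.unop)) (fι_inj _)).op (u.app _ t.1.2.2) :=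
          FunctorToTypes.naturality u _ _
        rw [hn]
        rfl }
  map_id S := by
    refine NatTrans.ext (funext fun X => ConcreteCategory.hom_ext _ _ fun x => ?_)
    induction x using Quot.ind
    rename_i t
    rfl
  map_comp u v := by
    refine NatTrans.ext (funext fun X => ConcreteCategory.hom_ext _ _ fun x => ?_)
    induction x using Quot.ind
    rename_i t
    rfl

noncomputable def coreHomEquiv :
    Adjunction.CoreHomEquiv H0 ((Functor.whiskeringLeft UDCatᵒᵖ UCatᵒᵖ Type).obj inclUDC.op) where
  homEquiv S T :=
    { toFun := fun α =>
        { app := fun P => TypeCat.ofHom fun γ => α.app (op (UCat.mk P.unop.len))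
            (Quot.mk _ ⟨⟨P.unop.len, id, γ⟩, surjective_id⟩)
          naturality := fun P Q u => by
            ext γ
            show α.app (inclUDC.op.obj Q)
                (Quot.mk _ ⟨⟨Q.unop.len, id, S.map u γ⟩, surjective_id⟩)
              = T.map (inclUDC.op.map u)
                (α.app (inclUDC.op.obj P) (Quot.mk _ ⟨⟨P.unop.len, id, γ⟩, surjective_id⟩))
            have hinj : Function.Injective (fσ (id ∘ u.unop.1)) := by
              have h3 : Function.Injective (fι (id ∘ u.unop.1) ∘ fσ (id ∘ u.unop.1)) := by
                rw [fι_fσ]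
                exact Function.injective_id.comp u.unop.2
              exact h3.of_comp
            have step1 : Quot.mk (TripleRel S Q.unop.len)
                ⟨⟨Q.unop.len, id, S.map u γ⟩, surjective_id⟩
                = (H0obj S).map (inclUDC.op.map u)
                  (Quot.mk _ ⟨⟨P.unop.len, id, γ⟩, surjective_id⟩) := by
              show _ = Quot.mk _ (factTriple S u.unop.1 ⟨⟨P.unop.len, id, γ⟩, surjective_id⟩)
              refine Quot.sound ⟨fσ (id ∘ u.unop.1), ⟨hinj, fσ_surj _⟩, rfl, ?_⟩
              show S.map u γ = S.map (homD (fσ (id ∘ u.unop.1)) hinj).op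
                (S.map (homD (fι (id ∘ u.unop.1)) (fι_inj _)).op γ)
              rw [← S_map_comp]
              have he : homD (fσ (id ∘ u.unop.1)) hinj ≫ homD (fι (id ∘ u.unop.1)) (fι_inj _)
                  = u.unop := Subtype.ext (fι_fσ _)
              rw [he, Quiver.Hom.op_unop]
            exact (congrArg (α.app (inclUDC.op.obj Q)) step1).trans
              (FunctorToTypes.naturality α (inclUDC.op.map u) _) }
      invFun := fun β =>
        { app := fun X => TypeCat.ofHom (Quot.lift
            (fun t => T.map (homC t.1.2.1).op (β.app (op (UDCat.mk t.1.1)) t.1.2.2))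
            (fun t t' h => by
              obtain ⟨φ, hφ, h1, h2⟩ := h
              show T.map (homC t.1.2.1).op (β.app (op (UDCat.mk t.1.1)) t.1.2.2)
                = T.map (homC t'.1.2.1).op (β.app (op (UDCat.mk t'.1.1)) t'.1.2.2)
              rw [h2]
              have hn : β.app (op (UDCat.mk t.1.1))
                  (S.map (Quiver.Hom.op
                    (⟨φ, hφ.injective⟩ : UDCat.mk t.1.1 ⟶ UDCat.mk t'.1.1)) t'.1.2.2)
                  = T.map (homC φ).op (β.app (op (UDCat.mk t'.1.1)) t'.1.2.2) :=
                FunctorToTypes.naturality β _ _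
              rw [hn]; erw [← FunctorToTypes.map_comp_apply]
              have he : (homC φ).op ≫ (homC t.1.2.1).op = (homC t'.1.2.1).op := by
                rw [← op_comp]
                apply congrArg Quiver.Hom.op
                exact h1.symm
              rw [he]))
          naturality := fun X Y g => by
            ext x
            induction x using Quot.ind
            rename_i t
            show T.map (homC (fσ (t.1.2.1 ∘ g.unop))).op
                (β.app (op (UDCat.mk (fq (t.1.2.1 ∘ g.unop))))
                  (S.map (homD (fι (t.1.2.1 ∘ g.unop)) (fι_inj _)).op t.1.2.2))
              = T.map g (T.map (homC t.1.2.1).op (β.app (op (UDCat.mk t.1.1)) t.1.2.2))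
            have hn : β.app (op (UDCat.mk (fq (t.1.2.1 ∘ g.unop))))
                (S.map (homD (fι (t.1.2.1 ∘ g.unop)) (fι_inj _)).op t.1.2.2)
                = T.map (homC (fι (t.1.2.1 ∘ g.unop))).op (β.app (op (UDCat.mk t.1.1)) t.1.2.2) :=
              FunctorToTypes.naturality β _ _
            rw [hn]; erw [← FunctorToTypes.map_comp_apply, ← FunctorToTypes.map_comp_apply]
            have e1 : (homC (fι (t.1.2.1 ∘ g.unop))).op ≫ (homC (fσ (t.1.2.1 ∘ g.unop))).op
                = (homC (t.1.2.1 ∘ g.unop)).op := by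
              rw [← op_comp]
              exact congrArg Quiver.Hom.op (fι_fσ _)
            have e2 : (homC t.1.2.1).op ≫ g = (homC (t.1.2.1 ∘ g.unop)).op := by
              rw [← Quiver.Hom.op_unop g, ← op_comp]
              rfl
            rw [e1, e2] }
      left_inv := fun α => by
        refine NatTrans.ext (funext fun X => ConcreteCategory.hom_ext _ _ fun x => ?_)
        induction x using Quot.ind
        rename_i t
        show T.map (homC t.1.2.1).op
            (α.app (op (UCat.mk t.1.1)) (Quot.mk _ ⟨⟨t.1.1, id, t.1.2.2⟩, surjective_id⟩))
          = α.app X (Quot.mk _ t)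
        exact (FunctorToTypes.naturality α ((homC t.1.2.1).op) _).symm.trans
          (congrArg (α.app X)
            (Quot.sound (factTriple_rel_self S t.1.2.1 ⟨⟨t.1.1, id, t.1.2.2⟩, surjective_id⟩ t.2)))
      right_inv := fun β => by
        refine NatTrans.ext (funext fun P => ConcreteCategory.hom_ext _ _ fun γ => ?_)
        show T.map (homC id).op (β.app P γ) = β.app P γ
        exact FunctorToTypes.map_id_apply T _
    }
  homEquiv_naturality_left_symm := fun u β => by
    refine NatTrans.ext (funext fun X => ConcreteCategory.hom_ext _ _ fun x => ?_)
    induction x using Quot.ind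
    rename_i t
    rfl
  homEquiv_naturality_right := fun α w => by
    refine NatTrans.ext (funext fun P => ConcreteCategory.hom_ext _ _ fun γ => ?_)
    rfl

noncomputable def myAdj :
    H0 ⊣ (Functor.whiskeringLeft UDCatᵒᵖ UCatᵒᵖ Type).obj inclUDC.op :=
  Adjunction.mkOfHomEquiv coreHomEquiv

end Stmt15Aux

/-- for any left adjoint `H` of the restriction functor along `ιᵒᵖ`,
any presheaf `S` on the injective category and any `n`, the set of `n`-simplices of
`H(S)` is in bijection with the quotient of the set of triples `(p, f, γ)` (with `f`
surjective) by the equivalence relation `TripleRel`. -/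
theorem stmt15 (H : (UDCatᵒᵖ ⥤ Type) ⥤ (UCatᵒᵖ ⥤ Type))
    (adj : H ⊣ (Functor.whiskeringLeft UDCatᵒᵖ UCatᵒᵖ Type).obj inclUDC.op)
    (S : UDCatᵒᵖ ⥤ Type) (n : ℕ) :
    Nonempty ((H.obj S).obj (op (UCat.mk n)) ≃ Quot (TripleRel S n)) := by
  exact ⟨((((Adjunction.leftAdjointUniq adj Stmt15Aux.myAdj).app S).app
    (op (UCat.mk n))).toEquiv)⟩
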